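/- With f(x) = ln x on (0,1] and f(x) = x−1 on (1,∞), for each N ∈ ℕ and aₙ := N²/n², one has Σ_{n=1}^∞ A_f(a₁,…,aₙ) ≥ N²·ln N; consequently the Hardy constant of A_f is +∞. -/

import Mathlib

/-- The quasi-arithmetic mean generated by `f`, the inverse being taken on `I`. -/
noncomputable def qam (f : ℝ → ℝ) (I : Set ℝ) (n : ℕ) (a : Fin n → ℝ) : ℝ :=
  Function.invFunOn f I ((∑ i, f (a i)) / n)

/-- The specific generator: `f x = ln x` on `(0,1]` and `f x = x - 1` on `(1,∞)`. -/
noncomputable def fExa : ℝ → ℝ := fun x => if x ≤ 1 then Real.log x else x - 1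

lemma fExa_of_one_le {x : ℝ} (h : 1 ≤ x) : fExa x = x - 1 := by
  unfold fExa
  split_ifs with h'
  · have : x = 1 := le_antisymm h' h
    simp [this]
  · rfl

lemma log_le_fExa {x : ℝ} (hx : 0 < x) : Real.log x ≤ fExa x := by
  unfold fExa; split_ifs with h
  · exact le_rfl
  · exact Real.log_le_sub_one_of_pos hx

lemma fExa_strictMonoOn : StrictMonoOn fExa (Set.Ioi 0) := by
  intro x hx y hy hxy
  simp only [Set.mem_Ioi] at hx hy
  unfold fExa
  split_ifs with h1 h2 h2
  · exact Real.log_lt_log hx hxy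
  · have : Real.log x ≤ 0 := Real.log_nonpos hx.le h1
    push_neg at h2
    linarith
  · linarith
  · linarith

lemma fExa_surj (y : ℝ) : ∃ x ∈ Set.Ioi (0:ℝ), fExa x = y := by
  rcases le_or_gt y 0 with h | h
  · refine ⟨Real.exp y, Real.exp_pos y, ?_⟩
    have h1 : Real.exp y ≤ 1 := Real.exp_le_one_iff.2 h
    simp [fExa, h1, Real.log_exp]
  · refine ⟨y + 1, by simp [Set.mem_Ioi]; linarith, ?_⟩
    have : ¬ (y + 1 ≤ 1) := by linarith
    simp [fExa, this]

lemma qam_mem (n : ℕ) (a : Fin n → ℝ) : qam fExa (Set.Ioi 0) n a ∈ Set.Ioi (0:ℝ) :=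
  Function.invFunOn_mem (fExa_surj _)

lemma qam_eq (n : ℕ) (a : Fin n → ℝ) :
    fExa (qam fExa (Set.Ioi 0) n a) = (∑ i, fExa (a i)) / n :=
  Function.invFunOn_eq (fExa_surj _)

lemma qam_le {n : ℕ} {a : Fin n → ℝ} {t : ℝ} (ht : t ∈ Set.Ioi (0:ℝ))
    (h : (∑ i, fExa (a i)) / n ≤ fExa t) : qam fExa (Set.Ioi 0) n a ≤ t := by
  have := (fExa_strictMonoOn.le_iff_le (qam_mem n a) ht).1
  apply this
  rw [qam_eq]
  exact h

lemma le_qam {n : ℕ} {a : Fin n → ℝ} {t : ℝ} (ht : t ∈ Set.Ioi (0:ℝ))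
    (h : fExa t ≤ (∑ i, fExa (a i)) / n) : t ≤ qam fExa (Set.Ioi 0) n a := by
  have := (fExa_strictMonoOn.le_iff_le ht (qam_mem n a)).1
  apply this
  rw [qam_eq]
  exact h

lemma harmonic_ge_log (N : ℕ) :
    Real.log (N + 1) ≤ ∑ k ∈ Finset.range N, 1 / ((k:ℝ) + 1) := by
  induction N with
  | zero => simp
  | succ m ih =>
    rw [Finset.sum_range_succ]
    have hm : (0:ℝ) < (m:ℝ) + 1 := by positivity
    have h1 : Real.log ((m:ℝ) + 1 + 1) - Real.log ((m:ℝ) + 1) ≤ 1 / ((m:ℝ) + 1) := by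
      rw [← Real.log_div (by positivity) (by positivity)]
      have h2 := Real.log_le_sub_one_of_pos (x := ((m:ℝ) + 1 + 1) / ((m:ℝ) + 1)) (by positivity)
      have h3 : ((m:ℝ) + 1 + 1) / ((m:ℝ) + 1) - 1 = 1 / ((m:ℝ) + 1) := by field_simp; ring
      linarith
    push_cast
    push_cast at ih
    linarith

lemma sum_log_ge (n : ℕ) :
    (n:ℝ) * Real.log n - n ≤ ∑ k ∈ Finset.range n, Real.log ((k:ℝ) + 1) := by
  induction n with
  | zero => simp
  | succ m ih =>
    rw [Finset.sum_range_succ]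
    rcases Nat.eq_zero_or_pos m with hm | hm
    · subst hm; simp
    have hm' : (0:ℝ) < (m:ℝ) := by exact_mod_cast hm
    have key : (m:ℝ) * (Real.log ((m:ℝ) + 1) - Real.log m) ≤ 1 := by
      rw [← Real.log_div (by positivity) (by positivity)]
      have h2 := Real.log_le_sub_one_of_pos (x := ((m:ℝ) + 1) / (m:ℝ)) (by positivity)
      have h3 : ((m:ℝ) + 1) / (m:ℝ) - 1 = 1 / (m:ℝ) := by field_simp; ring
      rw [h3] at h2
      calc (m:ℝ) * Real.log (((m:ℝ) + 1) / m) ≤ (m:ℝ) * (1 / m) :=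
            mul_le_mul_of_nonneg_left h2 hm'.le
        _ = 1 := by field_simp
    push_cast
    nlinarith [ih]

lemma sq_inv_partial (m : ℕ) : ∑ k ∈ Finset.range m, 1 / ((k:ℝ) + 1) ^ 2 ≤ 2 := by
  have key : ∀ m : ℕ, ∑ k ∈ Finset.range (m+1), 1 / ((k:ℝ) + 1) ^ 2 ≤ 2 - 1 / ((m:ℝ) + 1) := by
    intro m
    induction m with
    | zero => norm_num
    | succ p ih =>
      rw [Finset.sum_range_succ]
      have hp : (0:ℝ) < (p:ℝ) + 1 := by positivity
      have h1 : 1 / ((p:ℝ) + 1 + 1) ^ 2 ≤ 1 / ((p:ℝ) + 1) - 1 / ((p:ℝ) + 1 + 1) := by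
        rw [div_sub_div _ _ (by positivity) (by positivity)]
        rw [div_le_div_iff₀ (by positivity) (by positivity)]
        ring_nf
        nlinarith
      push_cast
      push_cast at ih
      linarith
  cases m with
  | zero => simp
  | succ p =>
    have := key p
    have hp : (0:ℝ) < (p:ℝ) + 1 := by positivity
    have : 1 / ((p:ℝ) + 1) > 0 := by positivity
    linarith [key p]

lemma sq_inv_summable : Summable (fun n : ℕ => 1 / ((n:ℝ) + 1) ^ 2) := by
  have h := (summable_nat_add_iff 1).2 (Real.summable_one_div_nat_pow.2 one_lt_two)
  apply h.congr
  intro n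
  push_cast
  ring

lemma sq_inv_tsum_le : ∑' n : ℕ, 1 / ((n:ℝ) + 1) ^ 2 ≤ 2 := by
  apply Summable.tsum_le_of_sum_le sq_inv_summable
  intro s
  rcases s.bddAbove with ⟨m, hm⟩
  calc ∑ k ∈ s, 1 / ((k:ℝ) + 1) ^ 2 ≤ ∑ k ∈ Finset.range (m+1), 1 / ((k:ℝ) + 1) ^ 2 := by
        apply Finset.sum_le_sum_of_subset_of_nonneg
        · intro x hx
          exact Finset.mem_range.2 (Nat.lt_succ_of_le (hm hx))
        · intros; positivity
    _ ≤ 2 := sq_inv_partial _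

section Main

variable {N : ℕ} (hN : 1 ≤ N) {a : ℕ → ℝ}
  (ha : ∀ n, a n = (N : ℝ) ^ 2 / ((n : ℝ) + 1) ^ 2)

include hN ha

lemma term_upper (k : ℕ) :
    fExa (a k) ≤ (N:ℝ)^2 + 2 * Real.log N - 2 * Real.log ((k:ℝ) + 1) := by
  have hN' : (0:ℝ) < N := by exact_mod_cast hN
  have hk : (0:ℝ) < (k:ℝ) + 1 := by positivity
  have hlog : Real.log (a k) = 2 * Real.log N - 2 * Real.log ((k:ℝ) + 1) := by
    rw [ha k, Real.log_div (by positivity) (by positivity), Real.log_pow, Real.log_pow]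
    push_cast; ring
  have hak : 0 < a k := by rw [ha k]; positivity
  unfold fExa
  split_ifs with h
  · rw [show Real.log (a k) = fExa (a k) by simp [fExa, h]] at hlog
    simp only [fExa, if_pos h] at hlog
    rw [hlog]
    nlinarith [sq_nonneg ((N:ℝ))]
  · push_neg at h
    have h2 : ((k:ℝ) + 1)^2 < (N:ℝ)^2 := by
      rw [ha k] at h
      exact (one_lt_div (by positivity : (0:ℝ) < ((k:ℝ)+1)^2)).1 h
    have h3 : (k:ℝ) + 1 < (N:ℝ) := by nlinarith
    have h4 : Real.log ((k:ℝ) + 1) ≤ Real.log N := Real.log_le_log hk h3.le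
    have hk1 : (1:ℝ) ≤ ((k:ℝ) + 1)^2 := by
      nlinarith [sq_nonneg ((k:ℝ)), (Nat.cast_nonneg k : (0:ℝ) ≤ (k:ℝ))]
    have h5 : a k ≤ (N:ℝ)^2 := by
      rw [ha k, div_le_iff₀ (by positivity)]
      nlinarith [sq_nonneg ((N:ℝ))]
    linarith

lemma qam_upper (n : ℕ) :
    qam fExa (Set.Ioi 0) (n + 1) (fun k : Fin (n + 1) => a (k : ℕ)) ≤
      Real.exp ((N:ℝ)^2 + 2 * Real.log N + 2) / ((n:ℝ) + 1) ^ 2 := by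
  set C : ℝ := (N:ℝ)^2 + 2 * Real.log N + 2 with hC
  have hn1 : (0:ℝ) < (n:ℝ) + 1 := by positivity
  have ht : Real.exp C / ((n:ℝ) + 1) ^ 2 ∈ Set.Ioi (0:ℝ) := by
    simp only [Set.mem_Ioi]; positivity
  apply qam_le ht
  have hlogt : Real.log (Real.exp C / ((n:ℝ) + 1) ^ 2) = C - 2 * Real.log ((n:ℝ) + 1) := by
    rw [Real.log_div (by positivity) (by positivity), Real.log_exp, Real.log_pow]
    push_cast; ring
  have hft := log_le_fExa (x := Real.exp C / ((n:ℝ) + 1) ^ 2) (by positivity)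
  rw [hlogt] at hft
  refine le_trans ?_ hft
  -- mean ≤ C - 2 log (n+1)
  rw [div_le_iff₀ (by exact_mod_cast hn1)]
  push_cast
  have hsum : ∑ i : Fin (n+1), fExa (a (i : ℕ)) = ∑ k ∈ Finset.range (n+1), fExa (a k) :=
    Fin.sum_univ_eq_sum_range (fun k => fExa (a k)) (n+1)
  rw [hsum]
  have h1 : ∑ k ∈ Finset.range (n+1), fExa (a k) ≤
      ∑ k ∈ Finset.range (n+1), ((N:ℝ)^2 + 2 * Real.log N - 2 * Real.log ((k:ℝ) + 1)) :=
    Finset.sum_le_sum (fun k _ => term_upper hN ha k)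
  have h2 : ∑ k ∈ Finset.range (n+1), ((N:ℝ)^2 + 2 * Real.log N - 2 * Real.log ((k:ℝ) + 1))
      = ((n:ℝ)+1) * ((N:ℝ)^2 + 2 * Real.log N)
        - 2 * ∑ k ∈ Finset.range (n+1), Real.log ((k:ℝ) + 1) := by
    rw [Finset.sum_sub_distrib, Finset.sum_const, Finset.card_range, ← Finset.mul_sum]
    push_cast; ring
  have h3 := sum_log_ge (n+1)
  push_cast at h3
  have hcast : ((n+1 : ℕ) : ℝ) = (n:ℝ) + 1 := by push_cast; ring
  calc ∑ k ∈ Finset.range (n+1), fExa (a k)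
      ≤ ((n:ℝ)+1) * ((N:ℝ)^2 + 2 * Real.log N)
        - 2 * ∑ k ∈ Finset.range (n+1), Real.log ((k:ℝ) + 1) := by rw [← h2]; exact h1
    _ ≤ ((n:ℝ)+1) * ((N:ℝ)^2 + 2 * Real.log N) - 2 * (((n:ℝ)+1) * Real.log ((n:ℝ)+1) - ((n:ℝ)+1)) := by
        linarith
    _ = (C - 2 * Real.log ((n:ℝ) + 1)) * ((n:ℝ) + 1) := by rw [hC]; ring

lemma summable_qam :
    Summable (fun n => qam fExa (Set.Ioi 0) (n + 1) (fun k : Fin (n + 1) => a (k : ℕ))) := by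
  apply Summable.of_nonneg_of_le
    (fun n => le_of_lt (qam_mem (n+1) _))
    (fun n => qam_upper hN ha n)
  have := sq_inv_summable.mul_left (Real.exp ((N:ℝ)^2 + 2 * Real.log N + 2))
  apply this.congr
  intro n
  rw [mul_one_div]

lemma qam_lower {n : ℕ} (hn : n < N) :
    (N:ℝ)^2 / ((n:ℝ) + 1) ≤ qam fExa (Set.Ioi 0) (n + 1) (fun k : Fin (n + 1) => a (k : ℕ)) := by
  have hN' : (1:ℝ) ≤ N := by exact_mod_cast hN
  have hn1 : (0:ℝ) < (n:ℝ) + 1 := by positivity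
  have hn1N : (n:ℝ) + 1 ≤ N := by exact_mod_cast hn
  have ht1 : (1:ℝ) ≤ (N:ℝ)^2 / ((n:ℝ) + 1) := by
    rw [le_div_iff₀ hn1]
    nlinarith
  apply le_qam (by simp only [Set.mem_Ioi]; linarith)
  rw [fExa_of_one_le ht1]
  rw [le_div_iff₀ (by exact_mod_cast hn1)]
  have hterm : ∀ k : Fin (n+1), fExa (a (k : ℕ)) = a (k : ℕ) - 1 := by
    intro k
    apply fExa_of_one_le
    rw [ha]
    rw [le_div_iff₀ (by positivity)]
    have hk : ((k:ℕ):ℝ) + 1 ≤ (N:ℝ) := by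
      have := k.isLt
      have : ((k:ℕ):ℝ) + 1 ≤ (n:ℝ) + 1 := by
        have : (k:ℕ) ≤ n := Nat.lt_succ_iff.1 k.isLt
        exact_mod_cast add_le_add_left (Nat.cast_le.2 this) 1
      linarith
    nlinarith
  rw [Finset.sum_congr rfl (fun k _ => hterm k)]
  rw [Finset.sum_sub_distrib, Finset.sum_const, Finset.card_univ, Fintype.card_fin]
  simp only [nsmul_eq_mul, mul_one]
  have hsum : (N:ℝ)^2 ≤ ∑ k : Fin (n+1), a (k : ℕ) := by
    have h0 : a ((0 : Fin (n+1)) : ℕ) = (N:ℝ)^2 := by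
      rw [ha]; norm_num
    calc (N:ℝ)^2 = a ((0 : Fin (n+1)) : ℕ) := h0.symm
      _ ≤ ∑ k : Fin (n+1), a (k : ℕ) := by
          apply Finset.single_le_sum (f := fun k : Fin (n+1) => a (k : ℕ))
          · intro i _
            rw [ha]; positivity
          · exact Finset.mem_univ _
  have hmul : ((N:ℝ)^2 / ((n:ℝ)+1) - 1) * ((n:ℝ)+1) = (N:ℝ)^2 - ((n:ℝ)+1) := by
    field_simp
  push_cast
  push_cast at hmul
  linarith [hsum, hmul]

lemma part1 :
    (N : ℝ) ^ 2 * Real.log N ≤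
      ∑' n, qam fExa (Set.Ioi 0) (n + 1) (fun k : Fin (n + 1) => a (k : ℕ)) := by
  have hsummable := summable_qam hN ha
  have hstep1 : ∑ n ∈ Finset.range N, qam fExa (Set.Ioi 0) (n + 1)
        (fun k : Fin (n + 1) => a (k : ℕ)) ≤
      ∑' n, qam fExa (Set.Ioi 0) (n + 1) (fun k : Fin (n + 1) => a (k : ℕ)) :=
    Summable.sum_le_tsum _ (fun n _ => le_of_lt (qam_mem (n+1) _)) hsummable
  have hstep2 : ∑ n ∈ Finset.range N, (N:ℝ)^2 / ((n:ℝ) + 1) ≤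
      ∑ n ∈ Finset.range N, qam fExa (Set.Ioi 0) (n + 1) (fun k : Fin (n + 1) => a (k : ℕ)) :=
    Finset.sum_le_sum (fun n hn => qam_lower hN ha (Finset.mem_range.1 hn))
  have hstep3 : (N:ℝ)^2 * Real.log N ≤ ∑ n ∈ Finset.range N, (N:ℝ)^2 / ((n:ℝ) + 1) := by
    have hh := harmonic_ge_log N
    have hlog : Real.log N ≤ Real.log ((N:ℝ) + 1) := by
      apply Real.log_le_log (by exact_mod_cast hN : (0:ℝ) < N)
      linarith
    calc (N:ℝ)^2 * Real.log N ≤ (N:ℝ)^2 * ∑ k ∈ Finset.range N, 1 / ((k:ℝ) + 1) := by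
          apply mul_le_mul_of_nonneg_left _ (by positivity)
          push_cast at hh
          linarith
      _ = ∑ n ∈ Finset.range N, (N:ℝ)^2 / ((n:ℝ) + 1) := by
          rw [Finset.mul_sum]
          exact Finset.sum_congr rfl (fun n _ => by rw [mul_one_div])
  linarith

end Main

theorem stmt_16 :
    (∀ N : ℕ, 1 ≤ N → ∀ a : ℕ → ℝ,
      (∀ n, a n = (N : ℝ) ^ 2 / ((n : ℝ) + 1) ^ 2) →
      (N : ℝ) ^ 2 * Real.log N ≤
        ∑' n, qam fExa (Set.Ioi 0) (n + 1) (fun k : Fin (n + 1) => a (k : ℕ))) ∧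
    ¬ (∃ C : ℝ, ∀ a : ℕ → ℝ, (∀ n, 0 < a n) → Summable a →
      Summable (fun n => qam fExa (Set.Ioi 0) (n + 1) (fun k : Fin (n + 1) => a (k : ℕ))) ∧
      ∑' n, qam fExa (Set.Ioi 0) (n + 1) (fun k : Fin (n + 1) => a (k : ℕ)) ≤
        C * ∑' n, a n) := by
  constructor
  · intro N hN a ha
    exact part1 hN ha
  · rintro ⟨C, hC⟩
    set C' : ℝ := max C 0 with hC'def
    have hC'0 : 0 ≤ C' := le_max_right _ _
    have hCC' : C ≤ C' := le_max_left _ _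
    -- choose N with log N > 2 * C'
    obtain ⟨N, hN1, hlogN⟩ : ∃ N : ℕ, 1 ≤ N ∧ 2 * C' < Real.log N := by
      refine ⟨⌈Real.exp (2 * C' + 1)⌉₊, ?_, ?_⟩
      · have := Real.exp_pos (2 * C' + 1)
        exact Nat.one_le_ceil_iff.2 this
      · have h1 : Real.exp (2 * C' + 1) ≤ (⌈Real.exp (2 * C' + 1)⌉₊ : ℝ) := Nat.le_ceil _
        have h2 : 2 * C' + 1 ≤ Real.log (⌈Real.exp (2 * C' + 1)⌉₊ : ℝ) := by
          have := Real.log_le_log (Real.exp_pos _) h1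
          rwa [Real.log_exp] at this
        linarith
    set a : ℕ → ℝ := fun n => (N : ℝ) ^ 2 / ((n : ℝ) + 1) ^ 2 with ha_def
    have ha : ∀ n, a n = (N : ℝ) ^ 2 / ((n : ℝ) + 1) ^ 2 := fun n => rfl
    have hNpos : (0:ℝ) < (N:ℝ) := by exact_mod_cast hN1
    have hapos : ∀ n, 0 < a n := by intro n; rw [ha]; positivity
    have hasum : Summable a := by
      have := sq_inv_summable.mul_left ((N:ℝ)^2)
      apply this.congr
      intro n
      rw [mul_one_div, ha]
    obtain ⟨hqsum, hqle⟩ := hC a hapos hasum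
    have h1 := part1 hN1 ha
    have htsum_a : ∑' n, a n ≤ 2 * (N:ℝ)^2 := by
      calc ∑' n, a n = (N:ℝ)^2 * ∑' n : ℕ, 1 / ((n:ℝ) + 1) ^ 2 := by
            rw [← tsum_mul_left]
            exact tsum_congr (fun n => by rw [mul_one_div, ha])
        _ ≤ (N:ℝ)^2 * 2 := by
            apply mul_le_mul_of_nonneg_left sq_inv_tsum_le (by positivity)
        _ = 2 * (N:ℝ)^2 := by ring
    have htsum_a_nonneg : 0 ≤ ∑' n, a n := tsum_nonneg (fun n => (hapos n).le)
    have h2 : ∑' n, qam fExa (Set.Ioi 0) (n + 1) (fun k : Fin (n + 1) => a (k : ℕ)) ≤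
        C' * (2 * (N:ℝ)^2) := by
      calc ∑' n, qam fExa (Set.Ioi 0) (n + 1) (fun k : Fin (n + 1) => a (k : ℕ)) ≤
            C * ∑' n, a n := hqle
        _ ≤ C' * ∑' n, a n := mul_le_mul_of_nonneg_right hCC' htsum_a_nonneg
        _ ≤ C' * (2 * (N:ℝ)^2) := mul_le_mul_of_nonneg_left htsum_a hC'0
    have hfinal : (N:ℝ)^2 * Real.log N ≤ 2 * C' * (N:ℝ)^2 := by
      calc (N:ℝ)^2 * Real.log N ≤ C' * (2 * (N:ℝ)^2) := le_trans h1 h2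
        _ = 2 * C' * (N:ℝ)^2 := by ring
    have : Real.log N ≤ 2 * C' := by
      have hN2 : (0:ℝ) < (N:ℝ)^2 := by positivity
      nlinarith
    linarith
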